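/- Uniform ultimate boundedness with constant gains and references (Corollary 1). Let θ : ℝ → ℝⁿ be continuously differentiable with bounded derivative, and let k_i > 0 and V_i^* > 0 be constants; set b_i = k_i V_i^*. Consider solutions of τ_i V̇_i(t) = V_i(t) [ (Ψ(θ(t)) V(t))_i + b_i ] with V(t₀) ∈ ℝⁿ₊. Then the system is uniformly bounded (for every R₁ > 0 there exists R₂(R₁) > 0 such that ‖V(t₀)‖ ≤ R₁ implies ‖V(t)‖ ≤ R₂(R₁) for all t ≥ t₀ and all t₀) and uniformly ultimately bounded (there exists R > 0 such that for every R₁ > 0 there exists T(R₁) > 0 with ‖V(t₀)‖ ≤ R₁ implying ‖V(t)‖ ≤ R for all t ≥ t₀ + T(R₁) and all t₀). -/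

import Mathlib

open Finset Matrix

/-- Euclidean norm on `Fin n → ℝ`. -/
noncomputable def euclNorm {n : ℕ} (x : Fin n → ℝ) : ℝ :=
  Real.sqrt (∑ i, x i ^ 2)

/-- A solution of the constant-gain quadratic-droop network
`τᵢ V̇ᵢ = Vᵢ ((Ψ(t) V)ᵢ + bᵢ)` starting in the nonnegative orthant at time `t₀`. -/
def IsConstNetSolution {n : ℕ} (τ : Fin n → ℝ) (Ψ : ℝ → Matrix (Fin n) (Fin n) ℝ)
    (b : Fin n → ℝ) (t₀ : ℝ) (V : ℝ → Fin n → ℝ) : Prop :=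
  (∀ i, 0 ≤ V t₀ i) ∧
  ∀ i, ∀ t ∈ Set.Ici t₀,
    HasDerivAt (fun s => V s i)
      (V t i * ((Ψ t).mulVec (V t) i + b i) / τ i) t

section helpers


/-- If `f` has nonpositive derivative on `[a,b]` (interior), it decreases. -/
lemma myAntitone {f f' : ℝ → ℝ} {a b : ℝ} (hab : a ≤ b)
    (hd : ∀ t ∈ Set.Icc a b, HasDerivAt f (f' t) t)
    (h0 : ∀ t ∈ Set.Ioo a b, f' t ≤ 0) : f b ≤ f a := by
  have hc : ContinuousOn f (Set.Icc a b) := fun t ht => ((hd t ht).continuousAt).continuousWithinAt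
  have hdiff : DifferentiableOn ℝ f (interior (Set.Icc a b)) := by
    rw [interior_Icc]
    exact fun t ht => ((hd t (Set.mem_Icc_of_Ioo ht)).differentiableAt).differentiableWithinAt
  have := antitoneOn_of_deriv_nonpos (convex_Icc a b) hc hdiff (fun t ht => by
    rw [interior_Icc] at ht
    rw [(hd t (Set.mem_Icc_of_Ioo ht)).deriv]
    exact h0 t ht)
  exact this (Set.left_mem_Icc.2 hab) (Set.right_mem_Icc.2 hab) hab

/-- Lemma A: if `W' ≤ 0` whenever `W ≥ m`, then `W t ≤ max (W t₀) m` for `t ≥ t₀`. -/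
lemma boundLemma {W W' : ℝ → ℝ} {t₀ m : ℝ}
    (hd : ∀ t ∈ Set.Ici t₀, HasDerivAt W (W' t) t)
    (hneg : ∀ t ∈ Set.Ici t₀, m ≤ W t → W' t ≤ 0) :
    ∀ t ∈ Set.Ici t₀, W t ≤ max (W t₀) m := by
  intro t₁ ht₁
  by_contra hcon
  push_neg at hcon
  set K := max (W t₀) m with hK
  have ht01 : t₀ < t₁ := by
    rcases lt_or_eq_of_le (Set.mem_Ici.1 ht₁) with h | h
    · exact h
    · exfalso; rw [← h] at hcon; exact absurd (le_max_left (W t₀) m) (not_le.2 hcon)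
  have hc : ContinuousOn W (Set.Icc t₀ t₁) := fun u hu =>
    ((hd u hu.1).continuousAt).continuousWithinAt
  set S := {u ∈ Set.Icc t₀ t₁ | W u ≤ K} with hS
  have hSne : S.Nonempty := ⟨t₀, Set.left_mem_Icc.2 ht01.le, le_max_left _ _⟩
  have hSclosed : IsClosed S := by
    have : S = Set.Icc t₀ t₁ ∩ W ⁻¹' (Set.Iic K) := rfl
    rw [this]
    exact hc.preimage_isClosed_of_isClosed isClosed_Icc isClosed_Iic
  have hScomp : IsCompact S := isCompact_Icc.of_isClosed_subset hSclosed (fun u hu => hu.1)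
  set s := sSup S with hs
  have hsmem : s ∈ S := hScomp.sSup_mem hSne
  have hst₀ : t₀ ≤ s := hsmem.1.1
  have hst₁ : s ≤ t₁ := hsmem.1.2
  have hWs : W s ≤ K := hsmem.2
  have hslt : s < t₁ := lt_of_le_of_ne hst₁ (fun h => by rw [h] at hWs; linarith)
  have hgt : ∀ u ∈ Set.Ioc s t₁, K < W u := by
    intro u hu
    by_contra h
    push_neg at h
    exact absurd (le_csSup hScomp.bddAbove (show u ∈ S from ⟨⟨hst₀.trans hu.1.le, hu.2⟩, h⟩)) (not_le.2 hu.1)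
  have : W t₁ ≤ W s := by
    refine myAntitone hslt.le (fun u hu => hd u (hst₀.trans hu.1)) ?_
    intro u hu
    refine hneg u (hst₀.trans hu.1.le) ?_
    have := hgt u ⟨hu.1, hu.2.le⟩
    exact le_trans (le_max_right _ _) this.le
  exact absurd (this.trans hWs) (not_le.2 hcon)

/-- Lemma B: ultimate bound. -/
lemma ultLemma {W W' : ℝ → ℝ} {t₀ m d T : ℝ}
    (hd : ∀ t ∈ Set.Ici t₀, HasDerivAt W (W' t) t)
    (hneg : ∀ t ∈ Set.Ici t₀, m ≤ W t → W' t ≤ -d)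
    (hdpos : 0 < d) (hT0 : 0 ≤ T) (hT : W t₀ - m ≤ d * T) :
    ∀ t ≥ t₀ + T, W t ≤ m := by
  have hex : ∃ s ∈ Set.Icc t₀ (t₀ + T), W s ≤ m := by
    by_contra h
    push_neg at h
    have hlast : m < W (t₀ + T) := h _ ⟨by linarith, le_refl _⟩
    -- on [t₀, t₀+T], derivative of (fun u => W u + d*u) is ≤ 0
    have key : (fun u => W u + d * u) (t₀ + T) ≤ (fun u => W u + d * u) t₀ := by
      refine myAntitone (f := fun u => W u + d * u) (f' := fun u => W' u + d)
        (by linarith) (fun u hu => ?_) (fun u hu => ?_)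
      · simpa using (hd u hu.1).fun_add ((hasDerivAt_id u).const_mul d)
      · have hm : m ≤ W u := (h u ⟨hu.1.le, hu.2.le⟩).le
        have := hneg u hu.1.le hm
        show W' u + d ≤ 0
        linarith
    simp only at key
    linarith
  obtain ⟨s, hs, hWs⟩ := hex
  intro t ht
  have hb := boundLemma (W' := W') (t₀ := s)
    (fun u hu => hd u (hs.1.trans hu))
    (fun u hu hm => (hneg u (hs.1.trans hu) hm).trans (by linarith))
    t (le_trans (by linarith [hs.2]) ht)
  calc W t ≤ max (W s) m := hb
    _ ≤ m := max_le hWs (le_refl m)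

/-- constancy helper -/
lemma myConst {f f' : ℝ → ℝ} {a b : ℝ} (hab : a ≤ b)
    (hd : ∀ t ∈ Set.Icc a b, HasDerivAt f (f' t) t)
    (h0 : ∀ t ∈ Set.Ioo a b, f' t = 0) : f b = f a := by
  have hc : ContinuousOn f (Set.Icc a b) := fun t ht => ((hd t ht).continuousAt).continuousWithinAt
  have hdiff : DifferentiableOn ℝ f (interior (Set.Icc a b)) := by
    rw [interior_Icc]
    exact fun t ht => ((hd t (Set.mem_Icc_of_Ioo ht)).differentiableAt).differentiableWithinAt
  have hder : ∀ t ∈ interior (Set.Icc a b), deriv f t = 0 := by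
    intro t ht
    rw [interior_Icc] at ht
    rw [(hd t (Set.mem_Icc_of_Ioo ht)).deriv]
    exact h0 t ht
  have h1 := antitoneOn_of_deriv_nonpos (convex_Icc a b) hc hdiff
    (fun t ht => le_of_eq (hder t ht))
    (Set.left_mem_Icc.2 hab) (Set.right_mem_Icc.2 hab) hab
  have h2 := monotoneOn_of_deriv_nonneg (convex_Icc a b) hc hdiff
    (fun t ht => ge_of_eq (hder t ht))
    (Set.left_mem_Icc.2 hab) (Set.right_mem_Icc.2 hab) hab
  linarith

/-- Solutions stay in the nonnegative orthant. -/
lemma nonneg_sol {n : ℕ} {τ : Fin n → ℝ} {Ψ : ℝ → Matrix (Fin n) (Fin n) ℝ}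
    {b : Fin n → ℝ} {t₀ : ℝ} {V : ℝ → Fin n → ℝ}
    (hτ : ∀ i, 0 < τ i)
    (hΨc : ∀ i j, ContinuousOn (fun t => Ψ t i j) (Set.Ici t₀))
    (hsol : IsConstNetSolution τ Ψ b t₀ V) :
    ∀ t ∈ Set.Ici t₀, ∀ i, 0 ≤ V t i := by
  have hVc : ∀ j, ContinuousOn (fun t => V t j) (Set.Ici t₀) :=
    fun j t ht => ((hsol.2 j t ht).continuousAt).continuousWithinAt
  intro t ht i
  set g : ℝ → ℝ := fun s => ((Ψ s).mulVec (V s) i + b i) / τ i with hg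
  have hgc : ContinuousOn g (Set.Ici t₀) := by
    apply ContinuousOn.div_const
    apply ContinuousOn.add _ continuousOn_const
    have : (fun s => (Ψ s).mulVec (V s) i) = fun s => ∑ j, Ψ s i j * V s j := by
      funext s; simp [Matrix.mulVec, dotProduct]
    rw [this]
    exact continuousOn_finset_sum _ (fun j _ => (hΨc i j).mul (hVc j))
  set gt : ℝ → ℝ := fun s => g (max s t₀) with hgt
  have hgtc : Continuous gt :=
    hgc.comp_continuous (continuous_id.max continuous_const) (fun x => le_max_right x t₀)
  set Gf : ℝ → ℝ := fun u => ∫ s in t₀..u, gt s with hGf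
  have hG : ∀ u, HasDerivAt Gf (gt u) u := by
    intro u
    exact intervalIntegral.integral_hasDerivAt_right
      (hgtc.intervalIntegrable _ _)
      (hgtc.stronglyMeasurableAtFilter _ _)
      hgtc.continuousAt
  set h : ℝ → ℝ := fun u => V u i * Real.exp (-Gf u) with hh
  have hderiv : ∀ u ∈ Set.Ici t₀, HasDerivAt h 0 u := by
    intro u hu
    have h1 : HasDerivAt (fun s => V s i) (V u i * g u) u := by
      have := hsol.2 i u hu
      rwa [mul_div_assoc] at this
    have h2 : HasDerivAt (fun s => Real.exp (-Gf s)) (Real.exp (-Gf u) * -(gt u)) u :=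
      ((hG u).neg).exp
    have h3 := h1.mul h2
    have hgu : gt u = g u := by simp [hgt, max_eq_left (Set.mem_Ici.1 hu)]
    refine h3.congr_deriv ?_
    rw [hgu]; ring
  have hconst : h t = h t₀ :=
    myConst ht (fun u hu => hderiv u (Set.mem_Icc.1 hu).1)
      (fun u hu => rfl)
  have : 0 ≤ h t := by
    rw [hconst]
    exact mul_nonneg (hsol.1 i) (Real.exp_nonneg _)
  have hepos : 0 < Real.exp (-Gf t) := Real.exp_pos _
  by_contra hneg
  push_neg at hneg
  have : h t < 0 := mul_neg_of_neg_of_pos hneg hepos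
  linarith



lemma quadBound {n : ℕ} (B G : Fin n → Fin n → ℝ) (Bsh k : Fin n → ℝ)
    (θv : Fin n → ℝ) (M : Matrix (Fin n) (Fin n) ℝ)
    (hBsymm : ∀ i j, B i j = B j i)
    (hGsymm : ∀ i j, G i j = G j i)
    (hBsh : ∀ i, 0 ≤ Bsh i)
    (hMdiag : ∀ i, M i i = -((Bsh i + ∑ j ∈ Finset.univ.erase i, |B i j|) + k i))
    (hMoff : ∀ i j, i ≠ j →
      M i j = G i j * Real.sin (θv i - θv j) + |B i j| * Real.cos (θv i - θv j))
    (x : Fin n → ℝ) :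
    ∑ i, x i * M.mulVec x i ≤ ∑ i, -(k i) * x i ^ 2 := by
  classical
  set Off : Fin n → Fin n → ℝ := fun i j => if i = j then 0 else M i j with hOff
  set Cf : Fin n → Fin n → ℝ := fun i j =>
    if i = j then 0 else |B i j| * Real.cos (θv i - θv j) with hCf
  set Bt : Fin n → Fin n → ℝ := fun i j => if i = j then 0 else |B i j| with hBt
  have hBtsymm : ∀ i j, Bt i j = Bt j i := by
    intro i j
    by_cases h : i = j
    · simp [hBt, h]
    · simp only [hBt, if_neg h, if_neg (fun hh => h hh.symm : ¬ j = i)]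
      rw [hBsymm i j]
  -- expansion
  have hexp : ∑ i, x i * M.mulVec x i
      = ∑ i, M i i * x i ^ 2 + ∑ i, ∑ j, Off i j * (x i * x j) := by
    rw [← Finset.sum_add_distrib]
    refine Finset.sum_congr rfl fun i _ => ?_
    have h1 : x i * M.mulVec x i = ∑ j, M i j * (x i * x j) := by
      simp only [Matrix.mulVec, dotProduct, Finset.mul_sum]
      refine Finset.sum_congr rfl fun j _ => by ring
    rw [h1]
    have h2 : ∀ j, M i j * (x i * x j)
        = (if i = j then M i i * x i ^ 2 else 0) + Off i j * (x i * x j) := by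
      intro j
      by_cases h : i = j
      · subst h
        rw [if_pos rfl]
        have h0 : Off i i = 0 := by simp [hOff]
        rw [h0]; ring
      · simp [hOff, h]
    rw [Finset.sum_congr rfl (fun j _ => h2 j), Finset.sum_add_distrib,
      Finset.sum_ite_eq univ i (fun _ => M i i * x i ^ 2)]
    simp
  -- symmetrization of the off-diagonal part
  have hOffsymm : ∀ i j, Off i j + Off j i = 2 * Cf i j := by
    intro i j
    by_cases h : i = j
    · simp [hOff, hCf, h]
    · have h' : j ≠ i := fun hh => h hh.symm
      simp only [hOff, hCf, if_neg h, if_neg h']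
      rw [hMoff i j h, hMoff j i h']
      have h1 : Real.sin (θv j - θv i) = -Real.sin (θv i - θv j) := by
        rw [← Real.sin_neg]; ring_nf
      have h2 : Real.cos (θv j - θv i) = Real.cos (θv i - θv j) := by
        rw [← Real.cos_neg]; ring_nf
      rw [h1, h2, hGsymm j i, hBsymm j i]
      ring
  have hT : ∑ i, ∑ j, Off i j * (x i * x j) = ∑ i, ∑ j, Cf i j * (x i * x j) := by
    have hswap : ∑ i, ∑ j, Off i j * (x i * x j) = ∑ i, ∑ j, Off j i * (x i * x j) := by
      rw [Finset.sum_comm]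
      refine Finset.sum_congr rfl fun i _ => Finset.sum_congr rfl fun j _ => by ring
    have h2 : 2 * ∑ i, ∑ j, Off i j * (x i * x j)
        = 2 * ∑ i, ∑ j, Cf i j * (x i * x j) := by
      calc 2 * ∑ i, ∑ j, Off i j * (x i * x j)
          = ∑ i, ∑ j, Off i j * (x i * x j) + ∑ i, ∑ j, Off j i * (x i * x j) := by
            rw [← hswap]; ring
        _ = ∑ i, ∑ j, (Off i j + Off j i) * (x i * x j) := by
            rw [← Finset.sum_add_distrib]
            refine Finset.sum_congr rfl fun i _ => ?_
            rw [← Finset.sum_add_distrib]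
            refine Finset.sum_congr rfl fun j _ => by ring
        _ = 2 * ∑ i, ∑ j, Cf i j * (x i * x j) := by
            rw [Finset.mul_sum]
            refine Finset.sum_congr rfl fun i _ => ?_
            rw [Finset.mul_sum]
            refine Finset.sum_congr rfl fun j _ => ?_
            rw [hOffsymm i j]; ring
    linarith
  -- pointwise bound
  have hCB : ∀ i j, Cf i j * (x i * x j) ≤ Bt i j * x i ^ 2 / 2 + Bt i j * x j ^ 2 / 2 := by
    intro i j
    by_cases h : i = j
    · simp [hCf, hBt, h]
    · simp only [hCf, hBt, if_neg h]
      have hb : (0:ℝ) ≤ |B i j| := abs_nonneg _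
      have hc1 : Real.cos (θv i - θv j) ≤ 1 := Real.cos_le_one _
      have hc2 : -1 ≤ Real.cos (θv i - θv j) := Real.neg_one_le_cos _
      nlinarith [mul_nonneg hb (sq_nonneg (x i - x j)), mul_nonneg hb (sq_nonneg (x i + x j)),
        mul_nonneg (mul_nonneg hb (sub_nonneg.2 hc1 : (0:ℝ) ≤ 1 - Real.cos (θv i - θv j)))
          (sq_nonneg (x i + x j))]
  have hsumbound : ∑ i, ∑ j, Cf i j * (x i * x j) ≤ ∑ i, (∑ j, Bt i j) * x i ^ 2 := by
    have step1 : ∑ i, ∑ j, Cf i j * (x i * x j)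
        ≤ ∑ i, ∑ j, (Bt i j * x i ^ 2 / 2 + Bt i j * x j ^ 2 / 2) :=
      Finset.sum_le_sum fun i _ => Finset.sum_le_sum fun j _ => hCB i j
    have h12 : (∑ i, ∑ j, Bt i j * x j ^ 2 / 2) = ∑ i, ∑ j, Bt i j * x i ^ 2 / 2 := by
      rw [Finset.sum_comm]
      refine Finset.sum_congr rfl fun i _ => Finset.sum_congr rfl fun j _ => ?_
      rw [hBtsymm j i]
    have step2 : ∑ i, ∑ j, (Bt i j * x i ^ 2 / 2 + Bt i j * x j ^ 2 / 2)
        = ∑ i, (∑ j, Bt i j) * x i ^ 2 := by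
      calc ∑ i, ∑ j, (Bt i j * x i ^ 2 / 2 + Bt i j * x j ^ 2 / 2)
          = (∑ i, ∑ j, Bt i j * x i ^ 2 / 2) + ∑ i, ∑ j, Bt i j * x j ^ 2 / 2 := by
            rw [← Finset.sum_add_distrib]
            refine Finset.sum_congr rfl fun i _ => Finset.sum_add_distrib
        _ = 2 * ∑ i, ∑ j, Bt i j * x i ^ 2 / 2 := by rw [h12]; ring
        _ = ∑ i, (∑ j, Bt i j) * x i ^ 2 := by
            rw [Finset.mul_sum]
            refine Finset.sum_congr rfl fun i _ => ?_
            rw [Finset.mul_sum, Finset.sum_mul]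
            refine Finset.sum_congr rfl fun j _ => by ring
    calc ∑ i, ∑ j, Cf i j * (x i * x j)
        ≤ ∑ i, ∑ j, (Bt i j * x i ^ 2 / 2 + Bt i j * x j ^ 2 / 2) := step1
      _ = ∑ i, (∑ j, Bt i j) * x i ^ 2 := step2
  have hBtrow : ∀ i, ∑ j, Bt i j = ∑ j ∈ Finset.univ.erase i, |B i j| := by
    intro i
    rw [← Finset.sum_erase_add Finset.univ (Bt i) (Finset.mem_univ i)]
    have : Bt i i = 0 := by simp [hBt]
    rw [this, add_zero]
    refine Finset.sum_congr rfl fun j hj => ?_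
    have : i ≠ j := fun h => (Finset.mem_erase.1 hj).1 h.symm
    simp [hBt, this]
  calc ∑ i, x i * M.mulVec x i
      = ∑ i, M i i * x i ^ 2 + ∑ i, ∑ j, Off i j * (x i * x j) := hexp
    _ ≤ ∑ i, M i i * x i ^ 2 + ∑ i, (∑ j, Bt i j) * x i ^ 2 := by
        rw [hT]; linarith [hsumbound]
    _ = ∑ i, (M i i + ∑ j, Bt i j) * x i ^ 2 := by
        rw [← Finset.sum_add_distrib]
        refine Finset.sum_congr rfl fun i _ => by ring
    _ ≤ ∑ i, -(k i) * x i ^ 2 := by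
        refine Finset.sum_le_sum fun i _ => ?_
        rw [hMdiag i, hBtrow i]
        have hx : (0:ℝ) ≤ x i ^ 2 := sq_nonneg _
        have := hBsh i
        nlinarith

end helpers

set_option maxHeartbeats 2000000 in
/-- Uniform boundedness and uniform ultimate boundedness with
constant gains and references (Corollary 1). -/
theorem constant_gain_network_uniformly_ultimately_bounded
    (n : ℕ) (hn : 1 ≤ n)
    (B G : Fin n → Fin n → ℝ) (Bsh τ k Vst : Fin n → ℝ)
    (hBsymm : ∀ i j, B i j = B j i)
    (hBle : ∀ i j, i ≠ j → B i j ≤ 0)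
    (hGsymm : ∀ i j, G i j = G j i)
    (hGge : ∀ i j, i ≠ j → 0 ≤ G i j)
    (hBsh : ∀ i, 0 ≤ Bsh i)
    (hτ : ∀ i, 0 < τ i)
    (hk : ∀ i, 0 < k i)
    (hVst : ∀ i, 0 < Vst i)
    (b : Fin n → ℝ) (hb : ∀ i, b i = k i * Vst i)
    (θ : ℝ → Fin n → ℝ)
    (hθC1 : ∀ i, ContDiff ℝ 1 (fun t => θ t i))
    (hθder : ∃ Mθ : ℝ, ∀ i t, |deriv (fun s => θ s i) t| ≤ Mθ)
    (Ψ : ℝ → Matrix (Fin n) (Fin n) ℝ)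
    (hΨdiag : ∀ t i,
      Ψ t i i = -((Bsh i + ∑ j ∈ Finset.univ.erase i, |B i j|) + k i))
    (hΨoff : ∀ t i j, i ≠ j →
      Ψ t i j = G i j * Real.sin (θ t i - θ t j)
                + |B i j| * Real.cos (θ t i - θ t j)) :
    -- uniform boundedness
    (∀ R₁ > (0 : ℝ), ∃ R₂ > (0 : ℝ), ∀ (t₀ : ℝ) (V : ℝ → Fin n → ℝ),
      IsConstNetSolution τ Ψ b t₀ V → euclNorm (V t₀) ≤ R₁ →
        ∀ t ≥ t₀, euclNorm (V t) ≤ R₂) ∧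
    -- uniform ultimate boundedness
    (∃ R > (0 : ℝ), ∀ R₁ > (0 : ℝ), ∃ T > (0 : ℝ),
      ∀ (t₀ : ℝ) (V : ℝ → Fin n → ℝ),
        IsConstNetSolution τ Ψ b t₀ V → euclNorm (V t₀) ≤ R₁ →
          ∀ t ≥ t₀ + T, euclNorm (V t) ≤ R) := by
  classical
  -- basic constants
  have hnpos : (0:ℝ) < n := by exact_mod_cast Nat.lt_of_lt_of_le Nat.zero_lt_one hn
  have hn1 : (1:ℝ) ≤ n := by exact_mod_cast hn
  obtain ⟨imin, -, hτminle⟩ := Finset.exists_min_image Finset.univ τ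
    ⟨⟨0, hn⟩, Finset.mem_univ _⟩
  set τm := τ imin with hτm
  have hτmpos : 0 < τm := hτ imin
  have hτmle : ∀ i, τm ≤ τ i := fun i => hτminle i (Finset.mem_univ i)
  set τmax := ∑ i, τ i with hτmax
  have hτmaxle : ∀ i, τ i ≤ τmax :=
    fun i => Finset.single_le_sum (fun j _ => (hτ j).le) (Finset.mem_univ i)
  have hτmaxpos : 0 < τmax := lt_of_lt_of_le hτmpos (hτmaxle imin)
  obtain ⟨ik, -, hkminle⟩ := Finset.exists_min_image Finset.univ k
    ⟨⟨0, hn⟩, Finset.mem_univ _⟩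
  set km := k ik with hkm
  have hkmpos : 0 < km := hk ik
  have hkmle : ∀ i, km ≤ k i := fun i => hkminle i (Finset.mem_univ i)
  set bs := ∑ i, b i with hbs
  have hbpos : ∀ i, 0 < b i := fun i => by rw [hb i]; exact mul_pos (hk i) (hVst i)
  have hbspos : 0 < bs := Finset.sum_pos (fun i _ => hbpos i) ⟨⟨0, hn⟩, Finset.mem_univ _⟩
  set m₀ : ℝ := 2 * n * bs / km with hm₀
  have hm₀pos : 0 < m₀ := by positivity
  set m : ℝ := τmax * m₀ with hm
  have hmpos : 0 < m := mul_pos hτmaxpos hm₀pos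
  set d₀ : ℝ := km * m₀ ^ 2 / (2 * n) with hd₀
  have hd₀pos : 0 < d₀ := by positivity
  have hm₀def : km * m₀ = 2 * n * bs := by
    rw [hm₀]; field_simp
  have hd₀def : 2 * n * d₀ = km * m₀ ^ 2 := by
    rw [hd₀]; field_simp
  clear_value τm τmax km bs m₀ m d₀
  -- continuity of Ψ entries
  have hΨc : ∀ i j, Continuous (fun t => Ψ t i j) := by
    intro i j
    by_cases h : i = j
    · subst h
      have : (fun t => Ψ t i i) = fun _ =>
          -((Bsh i + ∑ l ∈ Finset.univ.erase i, |B i l|) + k i) := by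
        funext t; exact hΨdiag t i
      rw [this]; exact continuous_const
    · have : (fun t => Ψ t i j) = fun t =>
          G i j * Real.sin (θ t i - θ t j) + |B i j| * Real.cos (θ t i - θ t j) := by
        funext t; exact hΨoff t i j h
      rw [this]
      have hθi : Continuous (fun t => θ t i) := (hθC1 i).continuous
      have hθj : Continuous (fun t => θ t j) := (hθC1 j).continuous
      exact ((continuous_const.mul (Real.continuous_sin.comp (hθi.sub hθj))).add
        (continuous_const.mul (Real.continuous_cos.comp (hθi.sub hθj))))
  -- per-solution facts
  have key : ∀ (t₀ : ℝ) (V : ℝ → Fin n → ℝ), IsConstNetSolution τ Ψ b t₀ V →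
      (∀ t ∈ Set.Ici t₀, ∀ i, 0 ≤ V t i) ∧
      (∀ t ∈ Set.Ici t₀, euclNorm (V t) ≤ (∑ i, τ i * V t i) / τm) ∧
      ((∑ i, τ i * V t₀ i) ≤ τmax * (n * euclNorm (V t₀))) ∧
      (∀ t ∈ Set.Ici t₀,
        HasDerivAt (fun s => ∑ i, τ i * V s i)
          (∑ i, V t i * ((Ψ t).mulVec (V t) i + b i)) t) ∧
      (∀ t ∈ Set.Ici t₀, m ≤ (∑ i, τ i * V t i) →
        (∑ i, V t i * ((Ψ t).mulVec (V t) i + b i)) ≤ -d₀) := by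
    intro t₀ V hsol
    have hnn : ∀ t ∈ Set.Ici t₀, ∀ i, 0 ≤ V t i :=
      nonneg_sol hτ (fun i j => (hΨc i j).continuousOn) hsol
    -- norm vs W
    have hnorm : ∀ t ∈ Set.Ici t₀, euclNorm (V t) ≤ (∑ i, τ i * V t i) / τm := by
      intro t ht
      have hnnt := hnn t ht
      have hNle : euclNorm (V t) ≤ ∑ i, V t i := by
        have h1 : ∑ i, V t i ^ 2 ≤ (∑ i, V t i) ^ 2 :=
          Finset.sum_sq_le_sq_sum_of_nonneg (fun i _ => hnnt i)
        have h2 := Real.sqrt_le_sqrt h1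
        rwa [Real.sqrt_sq (Finset.sum_nonneg fun i _ => hnnt i)] at h2
      have hWge : τm * (∑ i, V t i) ≤ ∑ i, τ i * V t i := by
        rw [Finset.mul_sum]
        exact Finset.sum_le_sum fun i _ => mul_le_mul_of_nonneg_right (hτmle i) (hnnt i)
      rw [le_div_iff₀ hτmpos]
      calc euclNorm (V t) * τm ≤ (∑ i, V t i) * τm :=
            mul_le_mul_of_nonneg_right hNle hτmpos.le
        _ = τm * (∑ i, V t i) := by ring
        _ ≤ ∑ i, τ i * V t i := hWge
    -- initial bound
    have hinit : (∑ i, τ i * V t₀ i) ≤ τmax * (n * euclNorm (V t₀)) := by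
      have hnn0 := hsol.1
      have hVle : ∀ i, V t₀ i ≤ euclNorm (V t₀) := by
        intro i
        rw [euclNorm]
        rw [show V t₀ i = Real.sqrt (V t₀ i ^ 2) from (Real.sqrt_sq (hnn0 i)).symm]
        exact Real.sqrt_le_sqrt (Finset.single_le_sum
          (fun j _ => sq_nonneg (V t₀ j)) (Finset.mem_univ i))
      calc ∑ i, τ i * V t₀ i ≤ ∑ i, τ i * euclNorm (V t₀) :=
            Finset.sum_le_sum fun i _ => by
              have h0 : 0 ≤ euclNorm (V t₀) := Real.sqrt_nonneg _
              exact mul_le_mul_of_nonneg_left (hVle i) (hτ i).le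
        _ = τmax * euclNorm (V t₀) := by rw [← Finset.sum_mul, ← hτmax]
        _ ≤ τmax * (n * euclNorm (V t₀)) := by
            have h0 : 0 ≤ euclNorm (V t₀) := Real.sqrt_nonneg _
            nlinarith [mul_nonneg (mul_nonneg hτmaxpos.le h0) (sub_nonneg.2 hn1)]
    -- derivative of W
    have hWd : ∀ t ∈ Set.Ici t₀,
        HasDerivAt (fun s => ∑ i, τ i * V s i)
          (∑ i, V t i * ((Ψ t).mulVec (V t) i + b i)) t := by
      intro t ht
      have : ∀ i ∈ Finset.univ, HasDerivAt (fun s => τ i * V s i)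
          (V t i * ((Ψ t).mulVec (V t) i + b i)) t := by
        intro i _
        have h1 := (hsol.2 i t ht).const_mul (τ i)
        have h2 : τ i * (V t i * ((Ψ t).mulVec (V t) i + b i) / τ i)
            = V t i * ((Ψ t).mulVec (V t) i + b i) := by
          field_simp [(hτ i).ne']
        rwa [h2] at h1
      exact HasDerivAt.fun_sum this
    -- derivative bound
    have hWb : ∀ t ∈ Set.Ici t₀, m ≤ (∑ i, τ i * V t i) →
        (∑ i, V t i * ((Ψ t).mulVec (V t) i + b i)) ≤ -d₀ := by
      intro t ht hmW
      have hnnt := hnn t ht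
      set N := ∑ i, V t i with hN
      clear_value N
      have hN0 : 0 ≤ N := by rw [hN]; exact Finset.sum_nonneg fun i _ => hnnt i
      -- W ≤ τmax N
      have hWle : (∑ i, τ i * V t i) ≤ τmax * N := by
        rw [hN, Finset.mul_sum]
        exact Finset.sum_le_sum fun i _ => mul_le_mul_of_nonneg_right (hτmaxle i) (hnnt i)
      have hNm₀ : m₀ ≤ N := by
        have : τmax * m₀ ≤ τmax * N := le_trans (by rw [← hm]) (le_trans hmW hWle)
        exact le_of_mul_le_mul_left this hτmaxpos
      -- quadratic form bound
      have hquad := quadBound B G Bsh k (θ t) (Ψ t) hBsymm hGsymm hBsh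
        (hΨdiag t) (fun i j hij => hΨoff t i j hij) (V t)
      have hquad2 : ∑ i, V t i * (Ψ t).mulVec (V t) i ≤ -km * ∑ i, V t i ^ 2 := by
        calc ∑ i, V t i * (Ψ t).mulVec (V t) i ≤ ∑ i, -(k i) * V t i ^ 2 := hquad
          _ ≤ ∑ i, -km * V t i ^ 2 := Finset.sum_le_sum fun i _ => by
              nlinarith [sq_nonneg (V t i), hkmle i]
          _ = -km * ∑ i, V t i ^ 2 := by rw [Finset.mul_sum]
      -- linear term bound
      have hlin : ∑ i, V t i * b i ≤ bs * N := by
        calc ∑ i, V t i * b i ≤ ∑ i, N * b i := Finset.sum_le_sum fun i _ => by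
              have h9 := Finset.single_le_sum (fun j _ => hnnt j) (Finset.mem_univ i)
              rw [← hN] at h9
              exact mul_le_mul_of_nonneg_right h9 (hbpos i).le
          _ = bs * N := by rw [← Finset.mul_sum, ← hbs]; ring
      -- Cauchy-Schwarz
      have hCS : N ^ 2 ≤ n * ∑ i, V t i ^ 2 := by
        rw [hN]
        have := sq_sum_le_card_mul_sum_sq (s := Finset.univ) (f := fun i => V t i)
        simpa using this
      have hsplit : (∑ i, V t i * ((Ψ t).mulVec (V t) i + b i))
          = (∑ i, V t i * (Ψ t).mulVec (V t) i) + ∑ i, V t i * b i := by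
        rw [← Finset.sum_add_distrib]
        exact Finset.sum_congr rfl fun i _ => by ring
      have hA : (∑ i, V t i * ((Ψ t).mulVec (V t) i + b i))
          ≤ -(km * N ^ 2) / n + bs * N := by
        rw [hsplit]
        have hdiv : (km * N ^ 2) / n * n = km * N ^ 2 := by
          field_simp
        have h3 : -km * ∑ i, V t i ^ 2 ≤ -(km * N ^ 2) / n := by
          have h4 := mul_le_mul_of_nonneg_left hCS hkmpos.le
          have h7 : -(km * N ^ 2) / n = -((km * N ^ 2) / n) := by ring
          rw [h7]
          nlinarith [hdiv, h4, hnpos]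
        linarith
      have h5 : n * (bs * N) + n * d₀ ≤ km * N ^ 2 := by
        nlinarith [mul_nonneg (mul_nonneg hkmpos.le (sub_nonneg.2 hNm₀))
          (by linarith : (0:ℝ) ≤ N + m₀ / 2), hm₀def, hd₀def]
      have h6 : bs * N + d₀ ≤ km * N ^ 2 / n := by
        rw [le_div_iff₀ hnpos]
        nlinarith
      have : -(km * N ^ 2) / n + bs * N ≤ -d₀ := by
        have : -(km * N ^ 2) / n = -(km * N ^ 2 / n) := by ring
        linarith [h6, this]
      linarith
    exact ⟨hnn, hnorm, hinit, hWd, hWb⟩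
  constructor
  · -- uniform boundedness
    intro R₁ hR₁
    refine ⟨max (τmax * (n * R₁)) m / τm, div_pos (lt_of_lt_of_le hmpos (le_max_right _ _)) hτmpos, ?_⟩
    intro t₀ V hsol hinit t ht
    obtain ⟨hnn, hnorm, hin, hWd, hWb⟩ := key t₀ V hsol
    have hbd := boundLemma hWd (fun u hu hm' => le_trans (hWb u hu hm') (by linarith)) t ht
    have hW0 : (∑ i, τ i * V t₀ i) ≤ τmax * (n * R₁) := by
      calc (∑ i, τ i * V t₀ i) ≤ τmax * (n * euclNorm (V t₀)) := hin
        _ ≤ τmax * (n * R₁) := by nlinarith [mul_pos hτmaxpos hnpos]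
    have hWt : (∑ i, τ i * V t i) ≤ max (τmax * (n * R₁)) m := by
      calc (∑ i, τ i * V t i) ≤ max (∑ i, τ i * V t₀ i) m := hbd
        _ ≤ max (τmax * (n * R₁)) m := max_le_max hW0 le_rfl
    calc euclNorm (V t) ≤ (∑ i, τ i * V t i) / τm := hnorm t ht
      _ ≤ max (τmax * (n * R₁)) m / τm := (div_le_div_iff_of_pos_right hτmpos).2 hWt
  · -- ultimate boundedness
    refine ⟨m / τm, div_pos hmpos hτmpos, ?_⟩
    intro R₁ hR₁
    have hTpos0 : 0 < τmax * (n * R₁) / d₀ :=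
      div_pos (mul_pos hτmaxpos (mul_pos hnpos hR₁)) hd₀pos
    refine ⟨τmax * (n * R₁) / d₀ + 1, by linarith, ?_⟩
    intro t₀ V hsol hinit t ht
    obtain ⟨hnn, hnorm, hin, hWd, hWb⟩ := key t₀ V hsol
    set T := τmax * (n * R₁) / d₀ + 1 with hT
    have hW0 : (∑ i, τ i * V t₀ i) ≤ τmax * (n * R₁) := by
      calc (∑ i, τ i * V t₀ i) ≤ τmax * (n * euclNorm (V t₀)) := hin
        _ ≤ τmax * (n * R₁) := by nlinarith [mul_pos hτmaxpos hnpos]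
    have hTd : (∑ i, τ i * V t₀ i) - m ≤ d₀ * T := by
      have hdT : d₀ * T = τmax * (n * R₁) + d₀ := by
        rw [hT, mul_add, mul_one, mul_div_cancel₀ _ hd₀pos.ne']
      linarith
    have hTpos : 0 < T := by rw [hT]; linarith
    have hult := ultLemma hWd hWb hd₀pos hTpos.le hTd t ht
    calc euclNorm (V t) ≤ (∑ i, τ i * V t i) / τm :=
          hnorm t (le_trans (le_add_of_nonneg_right hTpos.le) ht)
      _ ≤ m / τm := (div_le_div_iff_of_pos_right hτmpos).2 hult
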